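/- arXiv:1108.3199 — 4 statements merged into one kernel-verified Lean document; each statement's English description precedes it below -/
import Mathlib

section
/- Let U be a real vector space and let C be a complex vector subspace of the complexification U^ℂ = ℂ ⊗_ℝ U such that C ∩ C̄ = {0} and C + C̄ = U^ℂ. Then there exists a unique ℝ-linear map J : U → U with J ∘ J = −id_U such that C is the −i eigenspace of the complexified map J^ℂ := id_ℂ ⊗ J, i.e. C = {w ∈ U^ℂ : J^ℂ(w) = −i·w}. -/
open TensorProduct

/-- Conjugation on the complexification `ℂ ⊗[ℝ] U`, determined by `z ⊗ u ↦ z̄ ⊗ u`. -/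
noncomputable def complexificationConj (U : Type*) [AddCommGroup U] [Module ℝ U] :
    (ℂ ⊗[ℝ] U) →ₗ[ℝ] (ℂ ⊗[ℝ] U) :=
  LinearMap.rTensor U Complex.conjAe.toLinearMap

namespace CRAux

variable (U : Type*) [AddCommGroup U] [Module ℝ U]

noncomputable def cRe : (ℂ ⊗[ℝ] U) →ₗ[ℝ] U :=
  (TensorProduct.lid ℝ U).toLinearMap ∘ₗ LinearMap.rTensor U Complex.reLm

noncomputable def cIm : (ℂ ⊗[ℝ] U) →ₗ[ℝ] U :=
  (TensorProduct.lid ℝ U).toLinearMap ∘ₗ LinearMap.rTensor U Complex.imLm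

variable {U}

@[simp] lemma conj_tmul (z : ℂ) (u : U) :
    complexificationConj U (z ⊗ₜ[ℝ] u) = (starRingEnd ℂ) z ⊗ₜ[ℝ] u := by
  simp [complexificationConj]

@[simp] lemma cRe_tmul (z : ℂ) (u : U) : cRe U (z ⊗ₜ[ℝ] u) = z.re • u := by
  simp [cRe]

@[simp] lemma cIm_tmul (z : ℂ) (u : U) : cIm U (z ⊗ₜ[ℝ] u) = z.im • u := by
  simp [cIm]

lemma conj_conj (w : ℂ ⊗[ℝ] U) :
    complexificationConj U (complexificationConj U w) = w := by
  induction w using TensorProduct.induction_on with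
  | zero => simp
  | tmul z u => simp
  | add a b ha hb => simp [map_add, ha, hb]

lemma conj_smul (z : ℂ) (w : ℂ ⊗[ℝ] U) :
    complexificationConj U (z • w) = (starRingEnd ℂ) z • complexificationConj U w := by
  induction w using TensorProduct.induction_on with
  | zero => simp
  | tmul z' u => simp [TensorProduct.smul_tmul', smul_eq_mul, map_mul]
  | add a b ha hb => simp [smul_add, map_add, ha, hb]

lemma decomp (w : ℂ ⊗[ℝ] U) :
    w = (1 : ℂ) ⊗ₜ[ℝ] cRe U w + Complex.I ⊗ₜ[ℝ] cIm U w := by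
  induction w using TensorProduct.induction_on with
  | zero => simp
  | tmul z u =>
      rw [cRe_tmul, cIm_tmul, TensorProduct.tmul_smul, TensorProduct.tmul_smul,
        TensorProduct.smul_tmul', TensorProduct.smul_tmul', ← TensorProduct.add_tmul]
      congr 1
      simp [Complex.real_smul]
  | add a b ha hb =>
      rw [map_add, map_add, TensorProduct.tmul_add, TensorProduct.tmul_add]
      conv_rhs => rw [add_add_add_comm]
      exact congrArg₂ (· + ·) ha hb

lemma cIm_conj (w : ℂ ⊗[ℝ] U) :
    cIm U (complexificationConj U w) = - cIm U w := by
  induction w using TensorProduct.induction_on with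
  | zero => simp
  | tmul z u => simp
  | add a b ha hb => simp [map_add, ha, hb]; abel

lemma conj_fixed {w : ℂ ⊗[ℝ] U} (h : complexificationConj U w = w) :
    w = (1 : ℂ) ⊗ₜ[ℝ] cRe U w := by
  have him : cIm U w = 0 := by
    have h1 := cIm_conj w
    rw [h] at h1
    have h2 : (2:ℝ) • cIm U w = 0 := by
      rw [two_smul]; nth_rewrite 2 [h1]; exact add_neg_cancel _
    have h3 := congrArg (fun x => (2:ℝ)⁻¹ • x) h2
    simpa [smul_smul] using h3
  conv_lhs => rw [decomp w]
  rw [him]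
  simp

end CRAux

open CRAux

/-- If `C` is a complex subspace of the complexification `U^ℂ = ℂ ⊗[ℝ] U` with
`C ∩ C̄ = {0}` and `C + C̄ = U^ℂ`, then there is a unique linear complex structure
`J` on `U` whose complexification has `C` as its `−i` eigenspace. -/
theorem unique_complex_structure_of_cr_cocr
    (U : Type*) [AddCommGroup U] [Module ℝ U]
    (C : Submodule ℂ (ℂ ⊗[ℝ] U))
    (hint : C.restrictScalars ℝ ⊓ (C.restrictScalars ℝ).map (complexificationConj U) = ⊥)
    (hsum : C.restrictScalars ℝ ⊔ (C.restrictScalars ℝ).map (complexificationConj U) = ⊤) :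
    ∃! J : U →ₗ[ℝ] U, J ∘ₗ J = -LinearMap.id ∧
      ∀ w : ℂ ⊗[ℝ] U, w ∈ C ↔ LinearMap.lTensor ℂ J w = (-Complex.I) • w := by
  classical
  set W := ℂ ⊗[ℝ] U
  set σf := complexificationConj U with hσdef
  set C' := C.restrictScalars ℝ with hC'def
  set D := C'.map σf with hDdef
  have hcompl : IsCompl C' D := ⟨disjoint_iff.mpr hint, codisjoint_iff.mpr hsum⟩
  set p := C'.linearProjOfIsCompl D hcompl with hpdef
  set K : W →ₗ[ℝ] W :=
    ((Complex.I • LinearMap.id : W →ₗ[ℂ] W).restrictScalars ℝ) ∘ₗ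
      (LinearMap.id - (2:ℝ) • (C'.subtype ∘ₗ p)) with hKdef
  have hKapp : ∀ w : W, K w = Complex.I • (w - (2:ℝ) • (p w : W)) := by
    intro w; simp [hKdef]
  -- K on C
  have hKC : ∀ a ∈ C', K a = (-Complex.I) • a := by
    intro a ha
    have hp : p a = ⟨a, ha⟩ := Submodule.linearProjOfIsCompl_apply_left hcompl ⟨a, ha⟩
    rw [hKapp, hp]
    rw [two_smul]
    simp only [Submodule.coe_mk]
    rw [show a - (a + a) = -a by abel, smul_neg, neg_smul]
  -- K on conj C
  have hKD : ∀ a ∈ C', K (σf a) = Complex.I • σf a := by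
    intro a ha
    have hm : σf a ∈ D := Submodule.mem_map_of_mem ha
    have hp : p (σf a) = 0 := Submodule.linearProjOfIsCompl_apply_right hcompl ⟨σf a, hm⟩
    rw [hKapp, hp]
    simp
  -- decomposition
  have hdec : ∀ w : W, ∃ a ∈ C', ∃ c ∈ C', w = a + σf c := by
    intro w
    have hw : w ∈ C' ⊔ D := by rw [hsum]; trivial
    obtain ⟨a, ha, b, hb, hab⟩ := Submodule.mem_sup.mp hw
    obtain ⟨c, hc, rfl⟩ := hb
    exact ⟨a, ha, c, hc, hab.symm⟩
  have hsm : ∀ (z : ℂ) (a : W), a ∈ C' → z • a ∈ C' := fun z a ha => C.smul_mem z ha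
  -- K is ℂ-linear
  have hKsmul : ∀ (z : ℂ) (w : W), K (z • w) = z • K w := by
    intro z w
    obtain ⟨a, ha, c, hc, rfl⟩ := hdec w
    rw [smul_add, map_add, map_add, smul_add]
    congr 1
    · rw [hKC _ (hsm z a ha), hKC _ ha, smul_comm]
    · have h1 : z • σf c = σf ((starRingEnd ℂ) z • c) := by
        rw [conj_smul, Complex.conj_conj]
      rw [h1, hKD _ (hsm _ c hc), ← h1, hKD _ hc, smul_comm]
  -- conj commutes with K
  have hσK : ∀ w : W, σf (K w) = K (σf w) := by
    intro w
    obtain ⟨a, ha, c, hc, rfl⟩ := hdec w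
    have e1 : σf (K a) = K (σf a) := by
      rw [hKC _ ha, conj_smul, hKD _ ha, Complex.conj_neg_I]
    have e2 : σf (K (σf c)) = K (σf (σf c)) := by
      rw [hKD _ hc, conj_smul, conj_conj, hKC _ hc, Complex.conj_I]
    simp only [map_add]
    rw [e1, e2]
  -- K ∘ K = -1
  have hKK : ∀ w : W, K (K w) = -w := by
    intro w
    obtain ⟨a, ha, c, hc, rfl⟩ := hdec w
    rw [map_add, map_add, neg_add]
    congr 1
    · rw [hKC _ ha, hKsmul, hKC _ ha, smul_smul, neg_mul_neg, Complex.I_mul_I, neg_one_smul]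
    · rw [hKD _ hc, hKsmul, hKD _ hc, smul_smul, Complex.I_mul_I, neg_one_smul]
  -- K fixes the real points image
  have hσι : ∀ u : U, σf ((1:ℂ) ⊗ₜ[ℝ] u) = (1:ℂ) ⊗ₜ[ℝ] u := by
    intro u; rw [hσdef, conj_tmul, map_one]
  have hKι : ∀ u : U, K ((1:ℂ) ⊗ₜ[ℝ] u) = (1:ℂ) ⊗ₜ[ℝ] (cRe U (K ((1:ℂ) ⊗ₜ[ℝ] u))) := by
    intro u
    exact conj_fixed (by rw [hσK, hσι])
  set J : U →ₗ[ℝ] U := cRe U ∘ₗ K ∘ₗ (TensorProduct.mk ℝ ℂ U 1) with hJdef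
  have hJu : ∀ u : U, (1:ℂ) ⊗ₜ[ℝ] J u = K ((1:ℂ) ⊗ₜ[ℝ] u) := by
    intro u
    rw [hKι u]; rfl
  have hLT : ∀ w : W, LinearMap.lTensor ℂ J w = K w := by
    intro w
    induction w using TensorProduct.induction_on with
    | zero => simp
    | tmul z u =>
        rw [LinearMap.lTensor_tmul]
        have h1 : z ⊗ₜ[ℝ] u = z • ((1:ℂ) ⊗ₜ[ℝ] u) := by
          rw [TensorProduct.smul_tmul', smul_eq_mul, mul_one]
        have h2 : z ⊗ₜ[ℝ] J u = z • ((1:ℂ) ⊗ₜ[ℝ] J u) := by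
          rw [TensorProduct.smul_tmul', smul_eq_mul, mul_one]
        rw [h2, hJu, h1, hKsmul]
    | add a b ha hb => rw [map_add, map_add, ha, hb]
  refine ⟨J, ⟨?_, ?_⟩, ?_⟩
  · -- J ∘ J = -id
    ext u
    have h1 : (1:ℂ) ⊗ₜ[ℝ] (J (J u)) = (1:ℂ) ⊗ₜ[ℝ] (-u) := by
      rw [hJu, hJu, hKK, TensorProduct.tmul_neg]
    have h2 := congrArg (cRe U) h1
    simpa using h2
  · -- eigenspace characterization
    intro w
    constructor
    · intro hw
      rw [hLT]
      exact hKC w hw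
    · intro hw
      rw [hLT] at hw
      obtain ⟨a, ha, c, hc, rfl⟩ := hdec w
      rw [map_add, hKC _ ha, hKD _ hc, smul_add] at hw
      have h1 : Complex.I • σf c = (-Complex.I) • σf c := by
        exact add_left_cancel hw
      have h2 : ((2:ℂ) * Complex.I) • σf c = 0 := by
        have := sub_eq_zero_of_eq h1
        rw [← sub_smul] at this
        convert this using 2
        ring
      have h3 : σf c = 0 := by
        have h4 := congrArg (fun x => ((2:ℂ) * Complex.I)⁻¹ • x) h2
        simp only [smul_smul, smul_zero] at h4
        rw [inv_mul_cancel₀ (by simp [Complex.I_ne_zero]), one_smul] at h4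
        exact h4
      rw [h3, add_zero]
      exact ha
  · -- uniqueness
    rintro J' ⟨hJ'2, hJ'C⟩
    have hσJ' : ∀ w : W, σf (LinearMap.lTensor ℂ J' w) = LinearMap.lTensor ℂ J' (σf w) := by
      intro w
      induction w using TensorProduct.induction_on with
      | zero => simp
      | tmul z u => rw [hσdef]; simp
      | add a b ha hb => rw [map_add, map_add, ha, hb, map_add, map_add]
    have hJ'K : ∀ w : W, LinearMap.lTensor ℂ J' w = K w := by
      intro w
      obtain ⟨a, ha, c, hc, rfl⟩ := hdec w
      rw [map_add, map_add]
      congr 1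
      · rw [(hJ'C a).mp ha, hKC _ ha]
      · rw [← hσJ', (hJ'C c).mp hc, conj_smul, hKD _ hc]
        simp
        rfl
    ext u
    have h1 : (1:ℂ) ⊗ₜ[ℝ] (J' u) = (1:ℂ) ⊗ₜ[ℝ] (J u) := by
      have := hJ'K ((1:ℂ) ⊗ₜ[ℝ] u)
      rw [LinearMap.lTensor_tmul] at this
      rw [this, hJu]
    have h2 := congrArg (cRe U) h1
    simpa using h2
end

section
/- Let U be a real vector space and let (E, ι) and (E', ι') be CR pairs for U inducing the same linear CR structure, i.e. ker α_{(E,ι)} = ker α_{(E',ι')}. Then there exists a ℂ-linear isomorphism φ : E → E' with φ ∘ ι = ι'; that is, the CR pair realizing a given linear CR structure is unique up to complex linear isomorphism. -/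
open TensorProduct

lemma cr_alpha_surj
    (U : Type*) [AddCommGroup U] [Module ℝ U]
    (E : Type*) [AddCommGroup E] [Module ℂ E] [Module ℝ E] [IsScalarTower ℝ ℂ E]
    (ι : U →ₗ[ℝ] E)
    (hsum : LinearMap.range ι ⊔ (LinearMap.range ι).map
        ((Complex.I • (LinearMap.id : E →ₗ[ℂ] E)).restrictScalars ℝ) = ⊤)
    (α : (ℂ ⊗[ℝ] U) →ₗ[ℂ] E) (hα : ∀ u : U, α ((1 : ℂ) ⊗ₜ[ℝ] u) = ι u) :
    Function.Surjective α := by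
  rw [← LinearMap.range_eq_top]
  have h1 : LinearMap.range ι ≤ (LinearMap.range α).restrictScalars ℝ := by
    rintro x ⟨u, rfl⟩
    exact ⟨(1 : ℂ) ⊗ₜ[ℝ] u, hα u⟩
  have h2 : (LinearMap.range ι).map
      ((Complex.I • (LinearMap.id : E →ₗ[ℂ] E)).restrictScalars ℝ)
      ≤ (LinearMap.range α).restrictScalars ℝ := by
    rintro x ⟨y, ⟨u, rfl⟩, rfl⟩
    refine ⟨Complex.I ⊗ₜ[ℝ] u, ?_⟩
    have : (Complex.I : ℂ) ⊗ₜ[ℝ] u = Complex.I • ((1 : ℂ) ⊗ₜ[ℝ] u) := by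
      simp [TensorProduct.smul_tmul']
    simp [this, hα u]
  have : (⊤ : Submodule ℝ E) ≤ (LinearMap.range α).restrictScalars ℝ := by
    rw [← hsum]; exact sup_le h1 h2
  have := top_le_iff.mp this
  exact Submodule.restrictScalars_injective ℝ ℂ E (by simpa using this)

/-- If `(E, ι)` and `(E', ι')` are CR pairs for the real vector space `U` inducing the
same linear CR structure (i.e. the induced complex-linear maps
`α : ℂ ⊗[ℝ] U → E` and `α' : ℂ ⊗[ℝ] U → E'` have the same kernel), then there is a
complex-linear isomorphism `φ : E ≃ E'` with `φ ∘ ι = ι'`. -/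
theorem cr_pair_unique_up_to_iso
    (U : Type*) [AddCommGroup U] [Module ℝ U]
    (E : Type*) [AddCommGroup E] [Module ℂ E] [Module ℝ E] [IsScalarTower ℝ ℂ E]
    (E' : Type*) [AddCommGroup E'] [Module ℂ E'] [Module ℝ E'] [IsScalarTower ℝ ℂ E']
    (ι : U →ₗ[ℝ] E) (hinj : Function.Injective ι)
    (hsum : LinearMap.range ι ⊔ (LinearMap.range ι).map
        ((Complex.I • (LinearMap.id : E →ₗ[ℂ] E)).restrictScalars ℝ) = ⊤)
    (ι' : U →ₗ[ℝ] E') (hinj' : Function.Injective ι')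
    (hsum' : LinearMap.range ι' ⊔ (LinearMap.range ι').map
        ((Complex.I • (LinearMap.id : E' →ₗ[ℂ] E')).restrictScalars ℝ) = ⊤)
    (α : (ℂ ⊗[ℝ] U) →ₗ[ℂ] E) (hα : ∀ u : U, α ((1 : ℂ) ⊗ₜ[ℝ] u) = ι u)
    (α' : (ℂ ⊗[ℝ] U) →ₗ[ℂ] E') (hα' : ∀ u : U, α' ((1 : ℂ) ⊗ₜ[ℝ] u) = ι' u)
    (hker : LinearMap.ker α = LinearMap.ker α') :
    ∃ φ : E ≃ₗ[ℂ] E', ∀ u : U, φ (ι u) = ι' u := by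
  have hs : Function.Surjective α := cr_alpha_surj U E ι hsum α hα
  have hs' : Function.Surjective α' := cr_alpha_surj U E' ι' hsum' α' hα'
  let q := α.quotKerEquivOfSurjective hs
  let q' := α'.quotKerEquivOfSurjective hs'
  let e := Submodule.quotEquivOfEq _ _ hker
  refine ⟨q.symm.trans (e.trans q'), fun u => ?_⟩
  have hq : ∀ x : ℂ ⊗[ℝ] U, q (Submodule.Quotient.mk x) = α x := fun x => rfl
  have hq' : ∀ x : ℂ ⊗[ℝ] U, q' (Submodule.Quotient.mk x) = α' x := fun x => rfl
  have h1 : q.symm (ι u) = Submodule.Quotient.mk ((1 : ℂ) ⊗ₜ[ℝ] u) := by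
    apply q.injective; rw [q.apply_symm_apply, hq, hα]
  simp only [LinearEquiv.trans_apply, h1]
  have : e (Submodule.Quotient.mk ((1 : ℂ) ⊗ₜ[ℝ] u)) =
      Submodule.Quotient.mk ((1 : ℂ) ⊗ₜ[ℝ] u) := rfl
  rw [this, hq', hα']
end

section
/- Let k ≥ 1, let E be a (left) ℍ-module of real dimension 4k, and let U ⊆ E be a real vector subspace of dimension 4k − 1 (a real hyperplane). Then for every purely imaginary q ∈ ℍ with ‖q‖ = 1, one has U + q • U = E; that is, (U, E) is a CR quaternionic vector space. (This is the linear fact underlying the statement that every real hypersurface of a quaternionic manifold inherits a CR quaternionic structure, and Corollary 3.5.) -/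
open Quaternion

/-- Let `E` be a left `ℍ`-module of real dimension `4k`, `k ≥ 1`, and let `U ⊆ E` be a
real hyperplane (a real subspace of dimension `4k − 1`). Then `U + q • U = E` for every
unit purely imaginary quaternion `q`; that is, `(U, E)` is a CR quaternionic
vector space. -/
theorem hyperplane_is_cr_quaternionic
    (k : ℕ) (hk : 1 ≤ k)
    (E : Type*) [AddCommGroup E] [Module ℝ E] [Module ℍ[ℝ] E] [IsScalarTower ℝ ℍ[ℝ] E]
    (hE : Module.finrank ℝ E = 4 * k)
    (U : Submodule ℝ E) (hU : Module.finrank ℝ U = 4 * k - 1)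
    (q : ℍ[ℝ]) (hre : q.re = 0) (hnorm : ‖q‖ = 1) :
    U ⊔ U.map (DistribMulAction.toLinearMap ℝ E q) = ⊤ := by
  have hfd : FiniteDimensional ℝ E := Module.finite_of_finrank_pos (by omega)
  set f := DistribMulAction.toLinearMap ℝ E q with hf
  -- q * q = -1
  have hnsq : Quaternion.normSq q = 1 := by
    have := Quaternion.normSq_eq_norm_mul_self (a := q)
    rw [hnorm] at this; simpa using this
  have hsum : q.imI * q.imI + q.imJ * q.imJ + q.imK * q.imK = 1 := by
    have := Quaternion.normSq_def' q
    rw [hnsq, hre] at this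
    nlinarith [this]
  have hq2 : q * q = -1 := by
    ext <;> simp [Quaternion.re_mul, Quaternion.imI_mul, Quaternion.imJ_mul,
      Quaternion.imK_mul, hre] <;> nlinarith [hsum]
  have hff : ∀ x : E, q • q • x = -x := by
    intro x
    rw [smul_smul, hq2, neg_smul, one_smul]
  have hinj : Function.Injective f := by
    intro x y hxy
    have : q • q • x = q • q • y := by
      simp only [hf, DistribMulAction.toLinearMap, DistribSMul.toLinearMap_apply] at hxy
      rw [hxy]
    rw [hff, hff] at this
    exact neg_injective this
  by_contra hne
  set W := U ⊔ U.map f with hW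
  have hle : Module.finrank ℝ W < 4 * k := by
    rw [← hE]; exact Submodule.finrank_lt hne
  have hUW : U ≤ W := le_sup_left
  have hge : 4 * k - 1 ≤ Module.finrank ℝ W := by
    rw [← hU]; exact Submodule.finrank_mono hUW
  have hUeqW : U = W := Submodule.eq_of_le_of_finrank_le hUW (by omega)
  have hmapU : U.map f = U := by
    have hle2 : U.map f ≤ U := le_trans le_sup_right hUeqW.ge
    refine Submodule.eq_of_le_of_finrank_le hle2 ?_
    exact (U.equivMapOfInjective f hinj).finrank_eq.le
  have hmem : ∀ x ∈ U, q • x ∈ U := by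
    intro x hx
    rw [← hmapU]
    exact ⟨x, hx, rfl⟩
  set J : U →ₗ[ℝ] U := f.restrict (fun x hx => hmem x hx) with hJ
  have hJJ : J ∘ₗ J = -LinearMap.id := by
    ext x
    simp [hJ, hf, LinearMap.restrict_apply, DistribMulAction.toLinearMap, DistribSMul.toLinearMap_apply, hff]
  have hdet := congrArg LinearMap.det hJJ
  rw [LinearMap.det_comp] at hdet
  have hnegid : LinearMap.det (-LinearMap.id : U →ₗ[ℝ] U) = -1 := by
    have : (-LinearMap.id : U →ₗ[ℝ] U) = (-1 : ℝ) • LinearMap.id := by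
      ext x; simp
    rw [this, LinearMap.det_smul, LinearMap.det_id, mul_one, hU]
    have hodd : Odd (4 * k - 1) := ⟨2 * k - 1, by omega⟩
    exact hodd.neg_one_pow
  rw [hnegid] at hdet
  nlinarith [hdet, mul_self_nonneg (LinearMap.det J)]
end

section
/- (Example 1.3) For k ≥ 1, regard ℂ ⊆ ℍ as the real span of 1 and i, and let j ∈ ℍ be the second imaginary unit. Let V_k ⊆ ℍ^k be the set of vectors v of the form v_1 = z_1, v_m = z̄_{m−1} + z_m·j for even m with 2 ≤ m ≤ k, and v_m = z_m − z̄_{m−1}·j for odd m with 3 ≤ m ≤ k, where z_1, …, z_k ∈ ℂ satisfy z̄_k = (−1)^k z_k. Let U_k = V_k^⊥ be the orthogonal complement of V_k in ℍ^k with respect to the real inner product ⟨x, y⟩ = Σ_m re(x̄_m y_m). Then for every purely imaginary q ∈ ℍ with ‖q‖ = 1, U_k + q • U_k = ℍ^k, where q • x is coordinatewise left multiplication; that is, (U_k, ℍ^k) is a CR quaternionic vector space. -/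
open Quaternion

/-- The embedding of `ℂ` in `ℍ` as the real span of `1` and `i`. -/
def cq (z : ℂ) : ℍ[ℝ] := ⟨z.re, z.im, 0, 0⟩

/-- The second imaginary unit `j` of `ℍ`. -/
def jq : ℍ[ℝ] := ⟨0, 0, 1, 0⟩

@[simp] lemma cq_re (a : ℂ) : (cq a).re = a.re := rfl
@[simp] lemma cq_imI (a : ℂ) : (cq a).imI = a.im := rfl
@[simp] lemma cq_imJ (a : ℂ) : (cq a).imJ = 0 := rfl
@[simp] lemma cq_imK (a : ℂ) : (cq a).imK = 0 := rfl

lemma cq_add (a b : ℂ) : cq (a + b) = cq a + cq b := by ext <;> simp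
lemma cq_zero : cq 0 = 0 := by ext <;> simp
lemma cq_neg (a : ℂ) : cq (-a) = - cq a := by ext <;> simp
lemma cq_smul (r : ℝ) (a : ℂ) : cq (r • a) = r • cq a := by
  ext <;> simp [Complex.smul_re, Complex.smul_im]

lemma pair_eq (a b : ℂ) : cq a + cq b * jq = ⟨a.re, a.im, b.re, b.im⟩ := by
  ext <;> simp [Quaternion.re_mul, Quaternion.imI_mul, Quaternion.imJ_mul, Quaternion.imK_mul] <;> simp [jq]

lemma pair_inj {a b a' b' : ℂ} (h : cq a + cq b * jq = cq a' + cq b' * jq) :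
    a = a' ∧ b = b' := by
  rw [pair_eq, pair_eq] at h
  obtain ⟨h1, h2, h3, h4⟩ := QuaternionAlgebra.ext_iff.mp h
  exact ⟨Complex.ext h1 h2, Complex.ext h3 h4⟩

lemma mul_pair (p : ℍ[ℝ]) (a b : ℂ) :
    p * (cq a + cq b * jq)
      = cq ((⟨p.re, p.imI⟩ : ℂ) * a - (⟨p.imJ, p.imK⟩ : ℂ) * (starRingEnd ℂ) b)
        + cq ((⟨p.re, p.imI⟩ : ℂ) * b + (⟨p.imJ, p.imK⟩ : ℂ) * (starRingEnd ℂ) a) * jq := by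
  ext <;> simp [Quaternion.re_mul, Quaternion.imI_mul, Quaternion.imJ_mul, Quaternion.imK_mul,
    Complex.ext_iff] <;> simp [jq] <;> ring

lemma prevlt {k : ℕ} (m : Fin k) : m.val - 1 < k := lt_of_le_of_lt (Nat.sub_le _ _) m.isLt

/-- The pattern map defining `V_k`. -/
noncomputable def patt (k : ℕ) (z : Fin k → ℂ) (m : Fin k) : ℍ[ℝ] :=
  if m.val = 0 then cq (z m)
  else if m.val % 2 = 1 then
    cq ((starRingEnd ℂ) (z ⟨m.val - 1, prevlt m⟩)) + cq (z m) * jq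
  else
    cq (z m) - cq ((starRingEnd ℂ) (z ⟨m.val - 1, prevlt m⟩)) * jq

noncomputable def Pc (k : ℕ) (z : Fin k → ℂ) (m : Fin k) : ℂ :=
  if m.val = 0 then z m
  else if m.val % 2 = 1 then (starRingEnd ℂ) (z ⟨m.val - 1, prevlt m⟩)
  else z m

noncomputable def Rc (k : ℕ) (z : Fin k → ℂ) (m : Fin k) : ℂ :=
  if m.val = 0 then 0
  else if m.val % 2 = 1 then z m
  else -((starRingEnd ℂ) (z ⟨m.val - 1, prevlt m⟩))

lemma patt_eq (k : ℕ) (z : Fin k → ℂ) (m : Fin k) :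
    patt k z m = cq (Pc k z m) + cq (Rc k z m) * jq := by
  unfold patt Pc Rc
  split_ifs <;> simp [cq_zero, cq_neg, sub_eq_add_neg]

section Key

variable {k : ℕ}

lemma key (hk : 1 ≤ k) (q : ℍ[ℝ]) (hre : q.re = 0) (hnorm : ‖q‖ = 1)
    (z y : Fin k → ℂ)
    (hz : (starRingEnd ℂ) (z ⟨k - 1, Nat.sub_lt hk Nat.one_pos⟩) = (-1 : ℂ) ^ k * z ⟨k - 1, Nat.sub_lt hk Nat.one_pos⟩)
    (hy : (starRingEnd ℂ) (y ⟨k - 1, Nat.sub_lt hk Nat.one_pos⟩) = (-1 : ℂ) ^ k * y ⟨k - 1, Nat.sub_lt hk Nat.one_pos⟩)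
    (heq : ∀ m : Fin k, patt k z m = q * patt k y m) :
    z = 0 := by
  set α : ℂ := ⟨q.re, q.imI⟩ with hα
  set β : ℂ := ⟨q.imJ, q.imK⟩ with hβ
  have hconjα : (starRingEnd ℂ) α = -α := by
    apply Complex.ext <;> simp [hα, hre]
  have hnsq : q.imI ^ 2 + q.imJ ^ 2 + q.imK ^ 2 = 1 := by
    have h1 : normSq q = 1 := by
      rw [Quaternion.normSq_eq_norm_mul_self, hnorm]; norm_num
    have h2 := Quaternion.normSq_def' q
    rw [h1, hre] at h2
    nlinarith [h2]
  -- the component equations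
  have main : ∀ m : Fin k,
      Pc k z m = α * Pc k y m - β * (starRingEnd ℂ) (Rc k y m) ∧
      Rc k z m = α * Rc k y m + β * (starRingEnd ℂ) (Pc k y m) := by
    intro m
    have h := heq m
    rw [patt_eq, patt_eq, mul_pair] at h
    exact pair_inj h
  -- equations at index 0
  have h0 : z ⟨0, by omega⟩ = α * y ⟨0, by omega⟩ := by
    have := (main ⟨0, by omega⟩).1
    simpa [Pc, Rc] using this
  have h00 : β = 0 ∨ y ⟨0, by omega⟩ = 0 := by
    have h := (main ⟨0, by omega⟩).2
    simp [Pc, Rc] at h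
    exact h
  -- the two recursion identities
  have hAB : ∀ n : ℕ, ∀ hn1 : n + 1 < k,
      z ⟨n, by omega⟩ = (starRingEnd ℂ) α * y ⟨n, by omega⟩
          - (starRingEnd ℂ) β * y ⟨n + 1, hn1⟩ ∧
      z ⟨n + 1, hn1⟩ = α * y ⟨n + 1, hn1⟩ + β * y ⟨n, by omega⟩ := by
    intro n hn1
    obtain ⟨h1, h2⟩ := main ⟨n + 1, hn1⟩
    rcases Nat.even_or_odd n with he | ho
    · -- n even, so (n+1) % 2 = 1
      have hn0 : n % 2 = 0 := Nat.even_iff.mp he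
      have hmod : (n + 1) % 2 = 1 := by omega
      simp [Pc, Rc, hmod] at h1 h2
      refine ⟨?_, h2⟩
      have h3 := congrArg (starRingEnd ℂ) h1
      simpa [map_sub, map_mul] using h3
    · -- n odd, so (n+1) % 2 = 0
      have hn0 : n % 2 = 1 := Nat.odd_iff.mp ho
      have hmod : ¬ (n + 1) % 2 = 1 := by omega
      simp [Pc, Rc, hmod] at h1 h2
      refine ⟨?_, h1⟩
      have h2' : (starRingEnd ℂ) (z ⟨n, by omega⟩)
          = α * (starRingEnd ℂ) (y ⟨n, by omega⟩) - β * (starRingEnd ℂ) (y ⟨n + 1, hn1⟩) := by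
        have := congrArg Neg.neg h2
        simp only [neg_neg] at this
        rw [this]; ring
      have h3 := congrArg (starRingEnd ℂ) h2'
      simpa [map_sub, map_mul] using h3
  -- every coordinate satisfies z = α y + (β-term)
  have hBall : β = 0 → ∀ t : ℕ, ∀ ht : t < k, z ⟨t, ht⟩ = α * y ⟨t, ht⟩ := by
    intro hb t ht
    cases t with
    | zero => exact h0
    | succ n =>
      have := (hAB n ht).2
      rw [this, hb]; ring
  rcases eq_or_ne β 0 with hb | hb
  · -- case β = 0 : here α = ± i
    have hαne : α ≠ 0 := by
      intro h
      have h1 : q.imI = 0 := by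
        have := congrArg Complex.im h
        simpa [hα] using this
      have h2 : q.imJ = 0 := by
        have := congrArg Complex.re hb
        simpa [hβ] using this
      have h3 : q.imK = 0 := by
        have := congrArg Complex.im hb
        simpa [hβ] using this
      rw [h1, h2, h3] at hnsq; norm_num at hnsq
    have hsmall : ∀ t : ℕ, ∀ ht : t + 1 < k, y ⟨t, by omega⟩ = 0 := by
      intro t ht
      have h1 := (hAB t ht).1
      rw [hb, hconjα] at h1
      simp only [map_zero, zero_mul, sub_zero] at h1
      have h2 := hBall hb t (by omega)
      have : (2 : ℂ) * α * y ⟨t, by omega⟩ = 0 := by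
        linear_combination h1 - h2
      rcases mul_eq_zero.mp this with h | h
      · rcases mul_eq_zero.mp h with h' | h'
        · norm_num at h'
        · exact absurd h' hαne
      · exact h
    have hlast : y ⟨k - 1, by omega⟩ = 0 := by
      have h1 := hBall hb (k - 1) (by omega)
      have h2 := congrArg (starRingEnd ℂ) h1
      rw [hz, map_mul, hconjα, hy] at h2
      have : (-1 : ℂ) ^ k * ((2 : ℂ) * α * y ⟨k - 1, by omega⟩) = 0 := by
        linear_combination h2 - (-1 : ℂ) ^ k * h1
      have hne : (-1 : ℂ) ^ k ≠ 0 := pow_ne_zero _ (by norm_num)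
      rcases mul_eq_zero.mp this with h | h
      · exact absurd h hne
      · rcases mul_eq_zero.mp h with h' | h'
        · rcases mul_eq_zero.mp h' with h'' | h''
          · norm_num at h''
          · exact absurd h'' hαne
        · exact h'
    funext m
    have hm : (m : ℕ) < k := m.isLt
    have hy0 : y m = 0 := by
      rcases Nat.lt_or_ge (m.val + 1) k with h | h
      · have := hsmall m.val h
        simpa [Fin.eta] using this
      · have hmk : m.val = k - 1 := by omega
        have : m = ⟨k - 1, by omega⟩ := by
          apply Fin.ext; simpa using hmk
        rw [this]; exact hlast
    have := hBall hb m.val m.isLt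
    simp only [Fin.eta] at this
    rw [this, hy0, mul_zero]; rfl
  · -- case β ≠ 0
    have hy0 : y ⟨0, by omega⟩ = 0 := h00.resolve_left hb
    have main2 : ∀ n : ℕ, ∀ hn : n < k, y ⟨n, hn⟩ = 0 ∧ z ⟨n, hn⟩ = 0 := by
      intro n
      induction n with
      | zero => intro hn; exact ⟨hy0, by rw [h0, hy0, mul_zero]⟩
      | succ n ih =>
        intro hn
        obtain ⟨hyn, hzn⟩ := ih (by omega)
        obtain ⟨hA, hB⟩ := hAB n hn
        rw [hyn, hzn, mul_zero, zero_sub] at hA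
        have hy1 : y ⟨n + 1, hn⟩ = 0 := by
          have : (starRingEnd ℂ) β * y ⟨n + 1, hn⟩ = 0 := by
            linear_combination hA
          rcases mul_eq_zero.mp this with h | h
          · exact absurd h (by simpa using hb)
          · exact h
        refine ⟨hy1, ?_⟩
        rw [hB, hy1, hyn, mul_zero, mul_zero, add_zero]
    funext m
    have := (main2 m.val m.isLt).2
    simpa [Fin.eta] using this

end Key

lemma patt_add (k : ℕ) (z z' : Fin k → ℂ) : patt k (z + z') = patt k z + patt k z' := by
  funext m
  simp only [Pi.add_apply, patt_eq, Pc, Rc, Pi.add_apply]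
  split_ifs <;> simp [map_add, cq_add, add_mul, cq_zero, cq_neg] <;> abel

lemma cq_real_mul (r : ℝ) (a : ℂ) : cq (↑r * a) = r • cq a := by
  rw [← Complex.real_smul]; exact cq_smul r a

lemma patt_smul (k : ℕ) (r : ℝ) (z : Fin k → ℂ) : patt k (r • z) = r • patt k z := by
  funext m
  have hc : ∀ w : ℂ, (starRingEnd ℂ) (r • w) = r • (starRingEnd ℂ) w := by
    intro w; apply Complex.ext <;> simp [Complex.smul_re, Complex.smul_im]
  simp only [Pi.smul_apply, patt_eq, Pc, Rc]
  split_ifs <;>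
    simp [hc, cq_smul, cq_real_mul, smul_mul_assoc, smul_add, cq_zero, cq_neg, smul_neg]

abbrev Ek (k : ℕ) := PiLp 2 (fun _ : Fin k => ℍ[ℝ])

noncomputable def Lmap (k : ℕ) : (Fin k → ℂ) →ₗ[ℝ] Ek k where
  toFun z := WithLp.toLp 2 (patt k z)
  map_add' z z' := by rw [patt_add, WithLp.toLp_add]
  map_smul' r z := by rw [patt_smul]; rfl

noncomputable def Zsub (k : ℕ) (hk : 1 ≤ k) : Submodule ℝ (Fin k → ℂ) where
  carrier := {z | (starRingEnd ℂ) (z ⟨k - 1, Nat.sub_lt hk Nat.one_pos⟩) = (-1 : ℂ) ^ k * z ⟨k - 1, Nat.sub_lt hk Nat.one_pos⟩}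
  add_mem' := by
    intro a b ha hb
    simp only [Set.mem_setOf_eq, Pi.add_apply, map_add] at *
    rw [ha, hb]; ring
  zero_mem' := by simp
  smul_mem' := by
    intro r x hx
    simp only [Set.mem_setOf_eq, Pi.smul_apply] at *
    have : (starRingEnd ℂ) (r • x ⟨k - 1, Nat.sub_lt hk Nat.one_pos⟩) = r • (starRingEnd ℂ) (x ⟨k - 1, Nat.sub_lt hk Nat.one_pos⟩) := by
      apply Complex.ext <;> simp [Complex.smul_re, Complex.smul_im]
    rw [this, hx, mul_smul_comm]

noncomputable def Vsub (k : ℕ) (hk : 1 ≤ k) : Submodule ℝ (Ek k) := (Zsub k hk).map (Lmap k)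

noncomputable def lq (k : ℕ) (q : ℍ[ℝ]) : Ek k →ₗ[ℝ] Ek k where
  toFun x := WithLp.toLp 2 (fun m => q * x m)
  map_add' x y := PiLp.ext fun m => mul_add q (x m) (y m)
  map_smul' r x := PiLp.ext fun m => mul_smul_comm r q (x m)

-- cyclicity of re
lemma re_mul_comm (a b : ℍ[ℝ]) : (a * b).re = (b * a).re := by
  simp [Quaternion.re_mul]; ring

lemma inner_quat (a b : ℍ[ℝ]) : (inner ℝ a b) = (a * star b).re := rfl

-- adjoint identity
lemma inner_lq (k : ℕ) (q : ℍ[ℝ]) (v x : Ek k) :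
    (inner ℝ (lq k q v) x) = inner ℝ v (lq k (star q) x) := by
  simp only [PiLp.inner_apply]
  refine Finset.sum_congr rfl fun m _ => ?_
  show ((q * v m) * star (x m)).re = (v m * star (star q * x m)).re
  rw [star_mul, star_star]
  calc ((q * v m) * star (x m)).re = (q * (v m * star (x m))).re := by rw [mul_assoc]
    _ = ((v m * star (x m)) * q).re := re_mul_comm _ _
    _ = (v m * (star (x m) * q)).re := by rw [mul_assoc]

lemma re_star_mul (a b : ℍ[ℝ]) : (star a * b).re = (a * star b).re := by
  simp [Quaternion.re_mul]

lemma mem_orth_map (k : ℕ) (q : ℍ[ℝ]) (K : Submodule ℝ (Ek k)) (x : Ek k) :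
    x ∈ (K.map (lq k q))ᗮ ↔ lq k (star q) x ∈ Kᗮ := by
  simp only [Submodule.mem_orthogonal]
  constructor
  · intro h v hv
    have := h (lq k q v) (Submodule.mem_map_of_mem hv)
    rwa [inner_lq] at this
  · intro h v hv
    obtain ⟨u, hu, rfl⟩ := hv
    rw [inner_lq]
    exact h u hu

example (k : ℕ) : FiniteDimensional ℝ (Ek k) := by infer_instance

example (k : ℕ) (K : Submodule ℝ (Ek k)) : Kᗮᗮ = K := Submodule.orthogonal_orthogonal K

example (k : ℕ) : (⊥ : Submodule ℝ (Ek k))ᗮ = ⊤ := Submodule.bot_orthogonal_eq_top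

/-- (Example 1.3) For `k ≥ 1`, let `V_k ⊆ ℍ^k` consist of the vectors
`(z₁, z̄₁ + z₂·j, z₃ − z̄₂·j, …)` with `z₁, …, z_k ∈ ℂ` and `z̄_k = (−1)^k z_k`, and let
`U_k = V_k^⊥` with respect to the canonical real inner product on `ℍ^k`. Then
`U_k + q • U_k = ℍ^k` for every unit purely imaginary quaternion `q`; that is,
`(U_k, ℍ^k)` is a CR quaternionic vector space. -/
theorem example_Uk_is_cr_quaternionic
    (k : ℕ) (hk : 1 ≤ k)
    (V : Set (Fin k → ℍ[ℝ]))
    (hV : V = {v | ∃ z : Fin k → ℂ,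
      (starRingEnd ℂ) (z ⟨k - 1, by omega⟩) = (-1 : ℂ) ^ k * z ⟨k - 1, by omega⟩ ∧
      ∀ m : Fin k, v m =
        if m.val = 0 then cq (z m)
        else if m.val % 2 = 1 then
          cq ((starRingEnd ℂ) (z ⟨m.val - 1, by omega⟩)) + cq (z m) * jq
        else
          cq (z m) - cq ((starRingEnd ℂ) (z ⟨m.val - 1, by omega⟩)) * jq})
    (U : Set (Fin k → ℍ[ℝ]))
    (hU : U = {x | ∀ v ∈ V, (∑ m : Fin k, (star (v m) * x m).re) = 0})
    (q : ℍ[ℝ]) (hre : q.re = 0) (hnorm : ‖q‖ = 1) :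
    ∀ w : Fin k → ℍ[ℝ], ∃ u u' : Fin k → ℍ[ℝ], u ∈ U ∧ u' ∈ U ∧ w = u + q • u' := by
  intro w
  have hq1 : q * star q = 1 := by
    have h1 : normSq q = 1 := by
      rw [Quaternion.normSq_eq_norm_mul_self, hnorm]; norm_num
    rw [Quaternion.self_mul_star, h1]
    norm_num
  -- identify V with the submodule Vsub
  have hVV : V = WithLp.toLp 2 ⁻¹' ((Vsub k hk : Submodule ℝ (Ek k)) : Set (Ek k)) := by
    rw [hV]; ext v
    simp only [Set.mem_setOf_eq, Set.mem_preimage, Vsub, SetLike.mem_coe, Submodule.mem_map]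
    constructor
    · rintro ⟨z, hz1, hz2⟩
      exact ⟨z, hz1, congrArg (WithLp.toLp 2) (funext fun m => (hz2 m).symm)⟩
    · rintro ⟨z, hz1, hzv⟩
      exact ⟨z, hz1, fun m => (congrArg (fun u : Ek k => u m) hzv).symm⟩
  -- identify U with the orthogonal complement
  have hUU : U = WithLp.toLp 2 ⁻¹' (((Vsub k hk)ᗮ : Submodule ℝ (Ek k)) : Set (Ek k)) := by
    rw [hU]; ext x
    simp only [Set.mem_setOf_eq, Set.mem_preimage, SetLike.mem_coe, Submodule.mem_orthogonal]
    have hinner : ∀ v : Ek k, (inner ℝ v (WithLp.toLp 2 x)) = ∑ m : Fin k, (star (v m) * x m).re := by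
      intro v
      rw [PiLp.inner_apply]
      exact Finset.sum_congr rfl fun m _ => (re_star_mul (v m) (x m)).symm
    constructor
    · intro h v hv
      rw [hinner]
      exact h v.ofLp (by rw [hVV]; exact hv)
    · intro h v hv
      rw [← hinner (WithLp.toLp 2 v)]
      exact h (WithLp.toLp 2 v) (by rw [hVV] at hv; exact hv)
  -- the key intersection property
  have hinf : Vsub k hk ⊓ (Vsub k hk).map (lq k q) = ⊥ := by
    rw [eq_bot_iff]
    rintro v hv
    obtain ⟨hv1, hv2⟩ := Submodule.mem_inf.mp hv
    obtain ⟨z, hz, rfl⟩ := hv1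
    obtain ⟨u2, hu2, hql⟩ := hv2
    obtain ⟨y, hy, rfl⟩ := hu2
    have heq : ∀ m : Fin k, patt k z m = q * patt k y m := by
      intro m
      exact (congrArg (fun v : Ek k => v m) hql).symm
    have hz0 : z = 0 := key hk q hre hnorm z y hz hy heq
    simp only [Submodule.mem_bot]
    show WithLp.toLp 2 (patt k z) = 0
    rw [hz0]
    exact (map_zero (Lmap k))
  -- the sup of the orthogonal complements is everything
  have hsup : (Vsub k hk)ᗮ ⊔ ((Vsub k hk).map (lq k q))ᗮ = ⊤ := by
    have h1 : ((Vsub k hk)ᗮ ⊔ ((Vsub k hk).map (lq k q))ᗮ)ᗮ = ⊥ := by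
      rw [← Submodule.inf_orthogonal, Submodule.orthogonal_orthogonal,
        Submodule.orthogonal_orthogonal, hinf]
    calc (Vsub k hk)ᗮ ⊔ ((Vsub k hk).map (lq k q))ᗮ
        = ((Vsub k hk)ᗮ ⊔ ((Vsub k hk).map (lq k q))ᗮ)ᗮᗮ :=
          (Submodule.orthogonal_orthogonal _).symm
      _ = (⊥ : Submodule ℝ (Ek k))ᗮ := by rw [h1]
      _ = ⊤ := Submodule.bot_orthogonal_eq_top
  -- decompose w
  have hw : WithLp.toLp 2 w ∈ (Vsub k hk)ᗮ ⊔ ((Vsub k hk).map (lq k q))ᗮ := by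
    rw [hsup]; trivial
  obtain ⟨u, hu, u'', hu'', huw⟩ := Submodule.mem_sup.mp hw
  have hu' : lq k (star q) u'' ∈ (Vsub k hk)ᗮ := (mem_orth_map k q _ u'').mp hu''
  refine ⟨u.ofLp, (lq k (star q) u'').ofLp, ?_, ?_, ?_⟩
  · rw [hUU]; exact hu
  · rw [hUU]; exact hu'
  · have : q • (lq k (star q) u'').ofLp = u''.ofLp := by
      funext m
      show q * (star q * u'' m) = u'' m
      rw [← mul_assoc, hq1, one_mul]
    rw [this, ← WithLp.ofLp_add, huw]
end
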